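/- Let q be odd and let g ∈ GL_2m(q) act cyclically on V = F_q^{2m} with self-reciprocal characteristic polynomial χ(t) = t^{2m} + a₁t^{2m-1} + ... + a₁t + 1. Then there exists an involution h ∈ GL_2m(q) with h·g·h⁻¹ = g⁻¹ and det h = (-1)^m. -/

import Mathlib

open Equiv Equiv.Perm Matrix Polynomial

section helpers

lemma decomp_rev (n : ℕ) :
    Equiv.Perm.decomposeFin.symm (0, (Fin.revPerm : Perm (Fin n))) =
      finRotate (n+1) * (Fin.revPerm : Perm (Fin (n+1))) := by
  ext i
  refine Fin.cases ?_ (fun x => ?_) i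
  · simp [finRotate_last]
  · simp only [Perm.mul_apply, Fin.revPerm_apply, decomposeFin_symm_apply_succ,
      Equiv.swap_self, Equiv.refl_apply, Fin.rev_succ]
    have hne : (Fin.castSucc (Fin.rev x) : Fin (n+1)) ≠ Fin.last n := by
      simp [Fin.ext_iff]; omega
    rw [coe_finRotate_of_ne_last hne]
    simp

lemma sign_revPerm (n : ℕ) :
    Perm.sign (Fin.revPerm : Perm (Fin n)) = (-1) ^ (n * (n-1) / 2) := by
  induction n with
  | zero => simp [Subsingleton.elim (Fin.revPerm : Perm (Fin 0)) 1]
  | succ n ih =>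
    have h := congrArg Perm.sign (decomp_rev n)
    rw [Perm.sign_mul, sign_finRotate, Equiv.Perm.decomposeFin.symm_sign, if_pos rfl,
      one_mul, ih] at h
    have key : Perm.sign (Fin.revPerm : Perm (Fin (n+1))) = (-1)^n * (-1)^(n*(n-1)/2) := by
      rw [h, ← mul_assoc, ← pow_add, Even.neg_one_pow ⟨n, by omega⟩, one_mul]
    rw [key, ← pow_add]
    congr 1
    have h1 : n*(n-1)/2 * 2 = n*(n-1) := Nat.div_mul_cancel (Nat.even_mul_pred_self n).two_dvd
    have h2 : (n+1)*((n+1)-1)/2 * 2 = (n+1)*((n+1)-1) :=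
      Nat.div_mul_cancel (Nat.even_mul_pred_self (n+1)).two_dvd
    have e1 : (n+1)*((n+1)-1) = n*(n-1) + 2*n := by
      cases n with
      | zero => rfl
      | succ k => simp only [Nat.succ_sub_one]; ring
    omega

lemma sign_revPerm_even (m : ℕ) :
    Perm.sign (Fin.revPerm : Perm (Fin (2*m))) = (-1) ^ m := by
  rw [sign_revPerm]
  have e : 2*m*(2*m-1) = (m*(2*m-1))*2 := by ring
  rw [e, Nat.mul_div_cancel _ (by norm_num), mul_comm, pow_mul]
  cases m with
  | zero => simp
  | succ k =>
    have : 2*(k+1)-1 = 2*k+1 := by omega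
    rw [this, Odd.neg_one_pow ⟨k, by ring⟩, pow_succ]

lemma sum_mulVec {F : Type*} [Field F] {k : ℕ} {ι : Type*} (s : Finset ι)
    (f : ι → Matrix (Fin k) (Fin k) F) (v : Fin k → F) :
    (∑ i ∈ s, f i) *ᵥ v = ∑ i ∈ s, (f i) *ᵥ v := by
  induction s using Finset.cons_induction with
  | empty => simp [Matrix.zero_mulVec]
  | cons a s ha ih => simp [Matrix.add_mulVec, ih]

end helpers

theorem stmt_10 {F : Type*} [Field F] [Fintype F] (hq : Odd (Fintype.card F))
    (m : ℕ) (g : GL (Fin (2 * m)) F)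
    (hcyc : ∃ v : Fin (2 * m) → F,
      LinearIndependent F (fun i : Fin (2 * m) =>
        (((g : Matrix (Fin (2 * m)) (Fin (2 * m)) F)) ^ (i : ℕ)).mulVec v))
    (hsr : (Matrix.charpoly (g : Matrix (Fin (2 * m)) (Fin (2 * m)) F)).reverse =
      Matrix.charpoly (g : Matrix (Fin (2 * m)) (Fin (2 * m)) F)) :
    ∃ h : GL (Fin (2 * m)) F, h ^ 2 = 1 ∧ h * g * h⁻¹ = g⁻¹ ∧
      (h : Matrix (Fin (2 * m)) (Fin (2 * m)) F).det = (-1 : F) ^ m := by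
  rcases Nat.eq_zero_or_pos m with rfl | hm
  · haveI : IsEmpty (Fin (2*0)) := ⟨fun x => absurd x.2 (by omega)⟩
    haveI : Subsingleton (Matrix (Fin (2*0)) (Fin (2*0)) F) :=
      ⟨fun M N => by ext i j; exact i.elim0⟩
    haveI : Subsingleton (GL (Fin (2*0)) F) := ⟨fun a b => Units.ext (Subsingleton.elim _ _)⟩
    refine ⟨1, Subsingleton.elim _ _, Subsingleton.elim _ _, ?_⟩
    rw [Units.val_one, Matrix.det_one, pow_zero]
  haveI : Nonempty (Fin (2*m)) := ⟨⟨0, by omega⟩⟩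
  obtain ⟨v, hv⟩ := hcyc
  set A : Matrix (Fin (2*m)) (Fin (2*m)) F := (g : Matrix (Fin (2*m)) (Fin (2*m)) F) with hA
  set χ := A.charpoly with hχ
  have hdeg : χ.natDegree = 2*m := by
    rw [hχ, Matrix.charpoly_natDegree_eq_dim, Fintype.card_fin]
  have hmonic : χ.Monic := Matrix.charpoly_monic A
  have ha : ∀ j, j ≤ 2*m → χ.coeff j = χ.coeff (2*m - j) := by
    intro j hj
    conv_lhs => rw [← hsr]
    rw [Polynomial.coeff_reverse, hdeg, Polynomial.revAt_le hj]
  have ha0 : χ.coeff 0 = 1 := by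
    have := ha 0 (Nat.zero_le _)
    rwa [Nat.sub_zero, ← hdeg, hmonic.coeff_natDegree] at this
  have hsum : ∑ i ∈ Finset.range (2*m+1), χ.coeff i • A^i = 0 := by
    have h0 := Matrix.aeval_self_charpoly A
    rwa [Polynomial.aeval_eq_sum_range, hdeg] at h0
  -- the cyclic basis
  have card_eq : Fintype.card (Fin (2*m)) = Module.finrank F (Fin (2*m) → F) := by
    simp
  set b : Module.Basis (Fin (2*m)) F (Fin (2*m) → F) :=
    basisOfLinearIndependentOfCardEqFinrank hv card_eq with hbdef
  have hb : ∀ i : Fin (2*m), b i = (A^(i:ℕ)) *ᵥ v := by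
    intro i
    rw [hbdef, coe_basisOfLinearIndependentOfCardEqFinrank]
  -- the involution as a linear map
  set φ : (Fin (2*m) → F) →ₗ[F] (Fin (2*m) → F) := b.constr F (fun i => b i.rev) with hφdef
  have hφb : ∀ i, φ (b i) = b i.rev := fun i => b.constr_basis F _ i
  set H : Matrix (Fin (2*m)) (Fin (2*m)) F := LinearMap.toMatrix' φ with hHdef
  have hHv : ∀ x, H *ᵥ x = φ x := fun x => by
    rw [hHdef, ← Matrix.toLin'_apply, Matrix.toLin'_toMatrix']
  have hHH : H * H = 1 := by
    have hφφ : φ ∘ₗ φ = LinearMap.id := b.ext fun i => by simp [hφb]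
    rw [hHdef, ← LinearMap.toMatrix'_comp, hφφ, LinearMap.toMatrix'_id]
  -- the vector identity for the top power
  have hAn : (A^(2*m)) *ᵥ v = ∑ j : Fin (2*m), (-(χ.coeff (j:ℕ))) • b j := by
    have hc2m : χ.coeff (2*m) = 1 := by rw [← hdeg]; exact hmonic.coeff_natDegree
    have h1 := hsum
    rw [Finset.sum_range_succ, hc2m, one_smul] at h1
    have h2 : A^(2*m) = ∑ i ∈ Finset.range (2*m), -(χ.coeff i • A^i) := by
      rw [Finset.sum_neg_distrib]
      exact eq_neg_of_add_eq_zero_right h1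
    rw [h2, _root_.sum_mulVec, ← Fin.sum_univ_eq_sum_range
      (fun i => (-(χ.coeff i • A^i)) *ᵥ v)]
    refine Finset.sum_congr rfl fun j _ => ?_
    rw [hb j, Matrix.neg_mulVec, Matrix.smul_mulVec, ← neg_smul]
  -- the key identity on basis vectors
  have key : ∀ i : Fin (2*m), A *ᵥ (φ (A *ᵥ b i)) = b i.rev := by
    intro i
    have hi := i.isLt
    rcases Nat.lt_or_ge ((i:ℕ)+1) (2*m) with h1 | h1
    · have e1 : A *ᵥ b i = b ⟨(i:ℕ)+1, h1⟩ := by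
        rw [hb i, hb ⟨(i:ℕ)+1, h1⟩, Matrix.mulVec_mulVec, ← pow_succ']
      have hexp : (((⟨(i:ℕ)+1, h1⟩ : Fin (2*m)).rev : Fin (2*m)) : ℕ) + 1
          = ((i.rev : Fin (2*m)) : ℕ) := by
        simp only [Fin.val_rev]
        omega
      rw [e1, hφb, hb ((⟨(i:ℕ)+1, h1⟩ : Fin (2*m)).rev), hb i.rev,
        Matrix.mulVec_mulVec, ← pow_succ', hexp]
    · have hlast : (i:ℕ) = 2*m - 1 := by omega
      have e1 : A *ᵥ b i = (A^(2*m)) *ᵥ v := by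
        rw [hb i, Matrix.mulVec_mulVec, ← pow_succ',
          show (i:ℕ)+1 = 2*m by omega]
      have e2 : i.rev = ⟨0, by omega⟩ := by
        rw [Fin.ext_iff]
        simp only [Fin.val_rev]
        omega
      rw [e1, hAn, map_sum]
      have e3 : ∀ j : Fin (2*m), φ ((-(χ.coeff (j:ℕ))) • b j)
          = (-(χ.coeff (j:ℕ))) • b j.rev := by
        intro j; rw [LinearMap.map_smul, hφb]
      rw [Finset.sum_congr rfl fun j _ => e3 j]
      have e4 : A *ᵥ (∑ j : Fin (2*m), (-(χ.coeff (j:ℕ))) • b j.rev)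
          = ∑ j : Fin (2*m), (-(χ.coeff (j:ℕ))) • (A *ᵥ b j.rev) := by
        rw [← Matrix.mulVecLin_apply, map_sum]
        refine Finset.sum_congr rfl fun j _ => ?_
        rw [LinearMap.map_smul, Matrix.mulVecLin_apply]
      rw [e4]
      have e5 : ∀ j : Fin (2*m), A *ᵥ b j.rev = (A^(2*m - (j:ℕ))) *ᵥ v := by
        intro j
        have hexp : ((j.rev : Fin (2*m)) : ℕ) + 1 = 2*m - (j:ℕ) := by
          simp only [Fin.val_rev]
          omega
        rw [hb j.rev, Matrix.mulVec_mulVec, ← pow_succ', hexp]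
      have e6 : ∀ j : Fin (2*m), (-(χ.coeff (j:ℕ))) • (A *ᵥ b j.rev)
          = (-(χ.coeff (2*m - (j:ℕ)))) • ((A^(2*m - (j:ℕ))) *ᵥ v) := by
        intro j
        rw [e5 j, ha (j:ℕ) (le_of_lt j.isLt)]
      rw [Finset.sum_congr rfl fun j _ => e6 j]
      have e7 : ∑ j : Fin (2*m), (-(χ.coeff (2*m - (j:ℕ)))) • ((A^(2*m - (j:ℕ))) *ᵥ v)
          = ∑ j : Fin (2*m), (-(χ.coeff ((j:ℕ)+1))) • ((A^((j:ℕ)+1)) *ᵥ v) := by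
        rw [← Equiv.sum_comp (Fin.revPerm : Perm (Fin (2*m)))
          (fun j => (-(χ.coeff (2*m - (j:ℕ)))) • ((A^(2*m - (j:ℕ))) *ᵥ v))]
        refine Finset.sum_congr rfl fun j _ => ?_
        have hj : 2*m - ((Fin.revPerm j : Fin (2*m)) : ℕ) = (j:ℕ)+1 := by
          simp only [Fin.revPerm_apply, Fin.val_rev]
          omega
        rw [hj]
      rw [e7]
      have h8 : ∑ i ∈ Finset.range (2*m+1), χ.coeff i • ((A^i) *ᵥ v) = 0 := by
        have := congrArg (fun M => M *ᵥ v) hsum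
        simpa [_root_.sum_mulVec, Matrix.smul_mulVec, Matrix.zero_mulVec] using this
      rw [Finset.sum_range_succ'] at h8
      rw [ha0, pow_zero, Matrix.one_mulVec, one_smul] at h8
      have h9 : ∑ i ∈ Finset.range (2*m), χ.coeff (i+1) • ((A^(i+1)) *ᵥ v) = -v :=
        eq_neg_of_add_eq_zero_left h8
      rw [Fin.sum_univ_eq_sum_range (fun k => (-(χ.coeff (k+1))) • ((A^(k+1)) *ᵥ v))]
      have h10 : ∑ i ∈ Finset.range (2*m), (-(χ.coeff (i+1))) • ((A^(i+1)) *ᵥ v) = v := by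
        simp only [neg_smul]
        rw [Finset.sum_neg_distrib, h9, neg_neg]
      rw [h10, e2, hb ⟨0, by omega⟩]
      simp [Matrix.one_mulVec]
  -- key matrix identity
  have hAHA : A * H * A = H := by
    apply Matrix.toLin'.injective
    refine b.ext fun i => ?_
    rw [Matrix.toLin'_apply, Matrix.toLin'_apply, ← Matrix.mulVec_mulVec,
      ← Matrix.mulVec_mulVec, hHv, hHv, key i, hφb]
  -- assemble the unit
  refine ⟨⟨H, H, hHH, hHH⟩, ?_, ?_, ?_⟩
  · exact Units.ext (by rw [Units.val_pow_eq_pow_val, pow_two, hHH, Units.val_one])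
  · set h : GL (Fin (2*m)) F := ⟨H, H, hHH, hHH⟩ with hhdef
    have hu : g * h * g = h := by
      apply Units.ext
      rw [Units.val_mul, Units.val_mul]
      exact hAHA
    have h1 : h * g = g⁻¹ * h := by
      calc h * g = g⁻¹ * (g * h * g) := by group
      _ = g⁻¹ * h := by rw [hu]
    rw [h1, mul_assoc]
    group
  · show H.det = (-1 : F)^m
    have d1 : H.det = LinearMap.det φ := LinearMap.det_toMatrix' φ
    have d2 : LinearMap.det φ = (LinearMap.toMatrix b b φ).det :=
      (LinearMap.det_toMatrix b φ).symm
    have d3 : LinearMap.toMatrix b b φ = (Fin.revPerm : Perm (Fin (2*m))).permMatrix F := by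
      ext i j
      simp only [Equiv.Perm.permMatrix]
      rw [LinearMap.toMatrix_apply, hφb, b.repr_self, PEquiv.toMatrix_toPEquiv_eq, Matrix.submatrix_apply, id_eq,
        Finsupp.single_apply, Matrix.one_apply]
      simp only [Fin.revPerm_apply]
      by_cases hij : j.rev = i
      · rw [if_pos hij, if_pos (by rw [← hij, Fin.rev_rev])]
      · rw [if_neg hij, if_neg (fun hc => hij (by rw [← hc, Fin.rev_rev]))]
    rw [d1, d2, d3, Matrix.det_permutation, sign_revPerm_even]
    push_cast
    simp
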